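/- For every α > 1 and every x with 1/α ≤ x < 1, the inequality D(1/α ‖ x/(2αx - 1)) ≤ D(1/α ‖ x) holds, where D(a‖b) = a·ln(a/b) + (1-a)·ln((1-a)/(1-b)) is the KL divergence between Bernoulli distributions. -/

import Mathlib

noncomputable def klBer (a b : ℝ) : ℝ :=
  a * Real.log (a / b) + (1 - a) * Real.log ((1 - a) / (1 - b))

theorem stmt13 (α x : ℝ) (hα : 1 < α) (hx1 : 1 / α ≤ x) (hx2 : x < 1) :
    klBer (1 / α) (x / (2 * α * x - 1)) ≤ klBer (1 / α) x := by
  have hα0 : (0:ℝ) < α := by linarith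
  set g : ℝ → ℝ := fun t =>
    (1 - 1/α) * (Real.log ((2*α-1)*t - 1) - Real.log (1 - t)) - Real.log (2*α*t - 1)
    with hgdef
  have hfact : ∀ t ∈ Set.Ico (1/α) (1:ℝ),
      0 < (2*α-1)*t - 1 ∧ 0 < 1 - t ∧ 0 < 2*α*t - 1 := by
    intro t ht
    obtain ⟨h1, h2⟩ := ht
    have hαt : 1 ≤ α * t := by
      rw [div_le_iff₀ hα0] at h1; nlinarith
    have ht0 : 0 < t := by
      have : (0:ℝ) < 1/α := by positivity
      linarith
    refine ⟨by nlinarith, by linarith, by nlinarith⟩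
  -- derivative of g
  have hderiv : ∀ t ∈ Set.Ioo (1/α) (1:ℝ),
      HasDerivAt g ((1 - 1/α) * ((2*α-1)/((2*α-1)*t - 1) - (-1)/(1 - t)) - (2*α)/(2*α*t - 1)) t := by
    intro t ht
    obtain ⟨hv, h1t, hu⟩ := hfact t ⟨le_of_lt ht.1, ht.2⟩
    have d1 : HasDerivAt (fun t : ℝ => (2*α-1)*t - 1) (2*α-1) t := by
      simpa using ((hasDerivAt_id t).const_mul (2*α-1)).sub_const 1
    have d2 : HasDerivAt (fun t : ℝ => 1 - t) (-1) t := by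
      simpa using (hasDerivAt_id t).const_sub 1
    have d3 : HasDerivAt (fun t : ℝ => 2*α*t - 1) (2*α) t := by
      simpa using ((hasDerivAt_id t).const_mul (2*α)).sub_const 1
    exact (((d1.log (ne_of_gt hv)).sub (d2.log (ne_of_gt h1t))).const_mul (1 - 1/α)).sub
      (d3.log (ne_of_gt hu))
  have hderiv_nonneg : ∀ t ∈ Set.Ioo (1/α) (1:ℝ),
      0 ≤ (1 - 1/α) * ((2*α-1)/((2*α-1)*t - 1) - (-1)/(1 - t)) - (2*α)/(2*α*t - 1) := by
    intro t ht
    obtain ⟨hv, h1t, hu⟩ := hfact t ⟨le_of_lt ht.1, ht.2⟩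
    have hid : (1 - 1/α) * ((2*α-1)/((2*α-1)*t - 1) - (-1)/(1 - t)) - (2*α)/(2*α*t - 1)
        = 2*(2*α-1)*(α*t-1)^2 / (α * ((2*α-1)*t - 1) * (1 - t) * (2*α*t - 1)) := by
      have hv' : (α*2-1)*t - 1 ≠ 0 := by linarith
      have h1t' := h1t.ne'
      have hu' : α*2*t - 1 ≠ 0 := by linarith
      have hα' := hα0.ne'
      field_simp
      ring
    rw [hid]
    apply div_nonneg
    · nlinarith [sq_nonneg (α*t-1)]
    · have := mul_pos (mul_pos (mul_pos hα0 hv) h1t) hu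
      linarith
  -- monotonicity of g on Ico (1/α) 1
  have hmono : MonotoneOn g (Set.Ico (1/α) 1) := by
    have hconv : Convex ℝ (Set.Ico (1/α) (1:ℝ)) := convex_Ico _ _
    have hcont : ContinuousOn g (Set.Ico (1/α) 1) := by
      apply ContinuousOn.sub
      · apply ContinuousOn.mul continuousOn_const
        apply ContinuousOn.sub
        · exact ContinuousOn.log (by fun_prop) (fun t ht => ne_of_gt (hfact t ht).1)
        · exact ContinuousOn.log (by fun_prop) (fun t ht => ne_of_gt (hfact t ht).2.1)
      · exact ContinuousOn.log (by fun_prop) (fun t ht => ne_of_gt (hfact t ht).2.2)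
    apply monotoneOn_of_deriv_nonneg hconv hcont
    · intro t ht
      rw [interior_Ico] at ht
      exact (hderiv t ht).differentiableAt.differentiableWithinAt
    · intro t ht
      rw [interior_Ico] at ht
      rw [(hderiv t ht).deriv]
      exact hderiv_nonneg t ht
  have hainv1 : 1/α < 1 := by rw [div_lt_one hα0]; exact hα
  have ha_mem : 1/α ∈ Set.Ico (1/α) (1:ℝ) := ⟨le_refl _, hainv1⟩
  have hx_mem : x ∈ Set.Ico (1/α) (1:ℝ) := ⟨hx1, hx2⟩
  have hga : g (1/α) = 0 := by
    have e1 : (2*α-1)*(1/α) - 1 = 1 - 1/α := by field_simp; ring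
    have e2 : 2*α*(1/α) - 1 = 1 := by field_simp; norm_num
    have : g (1/α) = (1 - 1/α) * (Real.log ((2*α-1)*(1/α) - 1) - Real.log (1 - 1/α))
        - Real.log (2*α*(1/α) - 1) := rfl
    rw [this, e1, e2, Real.log_one]
    ring
  have hgx : 0 ≤ g x := by
    have := hmono ha_mem hx_mem hx1
    rw [hga] at this
    exact this
  -- now expand klBer and finish
  obtain ⟨hv, h1x, hu⟩ := hfact x hx_mem
  have hx0 : 0 < x := by
    have : (0:ℝ) < 1/α := by positivity
    linarith
  have ha0 : (0:ℝ) < 1/α := by positivity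
  have h1a : (0:ℝ) < 1 - 1/α := by linarith
  have h1y : 1 - x / (2*α*x - 1) = ((2*α-1)*x - 1) / (2*α*x - 1) := by
    have hu' : x*2*α - 1 ≠ 0 := by linarith
    field_simp; ring
  have key : klBer (1/α) x - klBer (1/α) (x / (2*α*x - 1)) = g x := by
    unfold klBer
    rw [h1y]
    rw [Real.log_div (ne_of_gt ha0) (ne_of_gt hx0),
        Real.log_div (ne_of_gt h1a) (ne_of_gt h1x),
        Real.log_div (ne_of_gt ha0) (ne_of_gt (div_pos hx0 hu)),
        Real.log_div (ne_of_gt h1a) (ne_of_gt (div_pos hv hu)),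
        Real.log_div (ne_of_gt hx0) (ne_of_gt hu),
        Real.log_div (ne_of_gt hv) (ne_of_gt hu)]
    simp only [hgdef]
    ring
  clear_value g
  have hgoal : klBer (1/α) (x / (2*α*x - 1)) ≤ klBer (1/α) x := by linarith
  exact hgoal
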